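/- Every finite simple graph G on n ≥ 1 vertices satisfies χ_c(G) ≤ 2·√n. -/

import Mathlib

open Filter MeasureTheory SimpleGraph

set_option linter.unusedVariables false

set_option maxHeartbeats 1000000

/-- A clique colouring with `k` colours: no maximal clique containing at least
two vertices is monochromatic. -/
def IsCliqueColouring {V : Type*} {k : ℕ} (G : SimpleGraph V) (c : V → Fin k) : Prop :=
  ∀ S : Set V, Maximal G.IsClique S → 2 ≤ S.ncard → ¬ ∃ a : Fin k, ∀ v ∈ S, c v = a

/-- The clique chromatic number: the least number of colours in a clique colouring. -/
noncomputable def cliqueChromNum {V : Type*} (G : SimpleGraph V) : ℕ :=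
  sInf {k : ℕ | ∃ c : V → Fin k, IsCliqueColouring G c}

section Aux

variable {V : Type*} [Fintype V] [DecidableEq V] (G : SimpleGraph V) [DecidableRel G.Adj]

/-- `c` distinguishes every clique contained in `A` that is maximal within `A`. -/
def GoodOnCC (A : Finset V) (c : V → ℕ) : Prop :=
  ∀ S : Set V, S ⊆ (A : Set V) → G.IsClique S →
    (∀ w ∈ (A : Set V), w ∉ S → ¬ G.IsClique (insert w S)) → 2 ≤ S.ncard →
    ∃ u ∈ S, ∃ v ∈ S, c u ≠ c v

/-- Greedy proper colouring of the graph induced on `A`, with colours in `(d, d+t]`,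
assuming every vertex has fewer than `t` neighbours inside `A`. -/
lemma greedyCC (t d : ℕ) :
    ∀ A : Finset V, (∀ u ∈ A, (A.filter (G.Adj u)).card < t) →
    ∃ c : V → ℕ, (∀ u ∈ A, d < c u ∧ c u ≤ d + t) ∧
      (∀ u ∈ A, ∀ v ∈ A, G.Adj u v → c u ≠ c v) := by
  intro A
  induction A using Finset.induction_on with
  | empty =>
    intro _
    exact ⟨fun _ => 0, by simp, by simp⟩
  | @insert a A' ha ih =>
    intro hdeg
    have hdeg' : ∀ u ∈ A', (A'.filter (G.Adj u)).card < t := by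
      intro u hu
      refine lt_of_le_of_lt (Finset.card_le_card ?_) (hdeg u (Finset.mem_insert_of_mem hu))
      exact Finset.filter_subset_filter _ (Finset.subset_insert _ _)
    obtain ⟨c, hcb, hcp⟩ := ih hdeg'
    -- colours used by neighbours of a in A'
    set N : Finset ℕ := (A'.filter (G.Adj a)).image c with hN
    have hNcard : N.card < t := by
      have h1 : (A'.filter (G.Adj a)).card < t := by
        refine lt_of_le_of_lt (Finset.card_le_card ?_) (hdeg a (Finset.mem_insert_self _ _))
        exact Finset.filter_subset_filter _ (Finset.subset_insert _ _)
      exact lt_of_le_of_lt (Finset.card_image_le) h1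
    have hT : (Finset.Ioc d (d + t)).card = t := by
      simp [Nat.add_sub_cancel_left]
    have hx : ∃ x ∈ Finset.Ioc d (d + t), x ∉ N := by
      by_contra hcon
      push_neg at hcon
      have : Finset.Ioc d (d + t) ⊆ N := fun x hx => hcon x hx
      have := Finset.card_le_card this
      omega
    obtain ⟨x, hxT, hxN⟩ := hx
    rw [Finset.mem_Ioc] at hxT
    refine ⟨Function.update c a x, ?_, ?_⟩
    · intro u hu
      rcases Finset.mem_insert.1 hu with rfl | hu'
      · simpa using hxT
      · have hne : u ≠ a := by rintro rfl; exact ha hu'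
        rw [Function.update_of_ne hne]
        exact hcb u hu'
    · intro u hu v hv hadj
      rcases Finset.mem_insert.1 hu with hua | hu' <;> rcases Finset.mem_insert.1 hv with hva | hv'
      · rw [hua, hva] at hadj
        exact absurd hadj (G.loopless.irrefl a)
      · have hvne : v ≠ a := fun hEq => ha (hEq ▸ hv')
        have hadj' : G.Adj a v := hua ▸ hadj
        have hvmem : c v ∈ N := Finset.mem_image_of_mem c (Finset.mem_filter.2 ⟨hv', hadj'⟩)
        rw [hua, Function.update_self, Function.update_of_ne hvne]
        intro hEq
        exact hxN (hEq ▸ hvmem)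
      · have hune : u ≠ a := fun hEq => ha (hEq ▸ hu')
        have hadj' : G.Adj a u := hva ▸ G.adj_symm hadj
        have humem : c u ∈ N := Finset.mem_image_of_mem c (Finset.mem_filter.2 ⟨hu', hadj'⟩)
        rw [hva, Function.update_self, Function.update_of_ne hune]
        intro hEq
        exact hxN (hEq ▸ humem)
      · have hune : u ≠ a := fun hEq => ha (hEq ▸ hu')
        have hvne : v ≠ a := fun hEq => ha (hEq ▸ hv')
        rw [Function.update_of_ne hune, Function.update_of_ne hvne]
        exact hcp u hu' v hv' hadj

/-- Main recursion: we can clique-colour the part of `G` inside `A` using colour `0`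
(for pivots) together with at most `m + min s h` colours from `(d, d + m + min s h]`,
where `m * (s+1) + h ≤ |A|`. -/
lemma mainCC (s : ℕ) (hs : 1 ≤ s) :
    ∀ N : ℕ, ∀ A : Finset V, A.card ≤ N → ∀ d : ℕ,
    ∃ (m h : ℕ) (c : V → ℕ), m * (s + 1) + h ≤ A.card ∧
      (∀ u ∈ A, c u = 0 ∨ (d < c u ∧ c u ≤ d + m + min s h)) ∧ GoodOnCC G A c := by
  intro N
  induction N with
  | zero =>
    intro A hA d
    refine ⟨0, 0, fun _ => 0, by simpa using hA, by simp, ?_⟩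
    intro S hSA _ _ h2
    have : A = ∅ := Finset.card_eq_zero.1 (Nat.le_zero.1 hA)
    subst this
    simp only [Finset.coe_empty, Set.subset_empty_iff] at hSA
    subst hSA
    simp at h2
  | succ N ih =>
    intro A hA d
    by_cases hdeg : ∃ v ∈ A, s ≤ (A.filter (G.Adj v)).card
    · -- pivot case
      obtain ⟨v, hvA, hvdeg⟩ := hdeg
      set B : Finset V := insert v (A.filter (G.Adj v)) with hB
      have hvnf : v ∉ A.filter (G.Adj v) := by
        simp only [Finset.mem_filter]
        rintro ⟨-, hadj⟩
        exact G.loopless.irrefl v hadj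
      have hBcard : s + 1 ≤ B.card := by
        rw [hB, Finset.card_insert_of_notMem hvnf]
        omega
      have hBA : B ⊆ A := by
        rw [hB]
        exact Finset.insert_subset hvA (Finset.filter_subset _ _)
      set A' : Finset V := A \ B with hA'
      have hA'card : A'.card = A.card - B.card := Finset.card_sdiff_of_subset hBA
      have hBlecard : B.card ≤ A.card := Finset.card_le_card hBA
      have hA'N : A'.card ≤ N := by omega
      obtain ⟨m', h', c', hcount, hbound, hgood⟩ := ih A' hA'N (d + 1)
      set c : V → ℕ := fun u =>
        if u = v then 0 else if u ∈ A.filter (G.Adj v) then d + 1 else c' u with hc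
      refine ⟨m' + 1, h', c, ?_, ?_, ?_⟩
      · have : (m' + 1) * (s + 1) + h' = (m' * (s + 1) + h') + (s + 1) := by ring
        omega
      · intro u hu
        by_cases h1 : u = v
        · left; simp [hc, h1]
        by_cases h2 : u ∈ A.filter (G.Adj v)
        · right
          have : c u = d + 1 := by simp only [hc]; rw [if_neg h1, if_pos h2]
          rw [this]
          constructor
          · omega
          · have : d + 1 ≤ d + (m' + 1) := by omega
            omega
        · have huA' : u ∈ A' := by
            rw [hA', Finset.mem_sdiff, hB]
            exact ⟨hu, by simp [h1, h2]⟩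
          have : c u = c' u := by simp only [hc]; rw [if_neg h1, if_neg h2]
          rw [this]
          rcases hbound u huA' with h0 | ⟨hlo, hhi⟩
          · left; exact h0
          · right
            constructor
            · omega
            · have : d + 1 + m' + min s h' ≤ d + (m' + 1) + min s h' := by omega
              omega
      · intro S hSA hclique hmax h2
        by_cases hvS : v ∈ S
        · obtain ⟨u, huS, hune⟩ := Set.exists_ne_of_one_lt_ncard (s := S) (by omega) v
          have hadj : G.Adj v u := G.adj_symm (hclique huS hvS hune)
          have huf : u ∈ A.filter (G.Adj v) :=
            Finset.mem_filter.2 ⟨by exact_mod_cast hSA huS, hadj⟩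
          refine ⟨v, hvS, u, huS, ?_⟩
          have h1 : c v = 0 := by simp [hc]
          have h2' : c u = d + 1 := by simp only [hc]; rw [if_neg hune, if_pos huf]
          omega
        by_cases hSf : ∃ u ∈ S, u ∈ A.filter (G.Adj v)
        · obtain ⟨u, huS, huf⟩ := hSf
          by_cases hall : ∀ w ∈ S, w ∈ A.filter (G.Adj v)
          · exfalso
            have hcl : G.IsClique (insert v S) := by
              refine hclique.insert fun b hb hne => ?_
              exact (Finset.mem_filter.1 (hall b hb)).2
            exact hmax v (by exact_mod_cast hvA) hvS hcl
          · push_neg at hall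
            obtain ⟨w, hwS, hwf⟩ := hall
            have hwv : w ≠ v := by rintro rfl; exact hvS hwS
            have huv : u ≠ v := by rintro rfl; exact hvS huS
            have hwA' : w ∈ A' := by
              rw [hA', Finset.mem_sdiff, hB]
              exact ⟨by exact_mod_cast hSA hwS, by simp [hwv, hwf]⟩
            refine ⟨u, huS, w, hwS, ?_⟩
            have h1 : c u = d + 1 := by simp only [hc]; rw [if_neg huv, if_pos huf]
            have h2' : c w = c' w := by simp only [hc]; rw [if_neg hwv, if_neg hwf]
            rcases hbound w hwA' with h0 | ⟨hlo, _⟩ <;> omega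
        · -- S avoids B entirely; use recursion
          push_neg at hSf
          have hSA' : S ⊆ (A' : Set V) := by
            intro x hx
            have hxv : x ≠ v := by rintro rfl; exact hvS hx
            have : x ∈ A' := by
              rw [hA', Finset.mem_sdiff, hB]
              exact ⟨by exact_mod_cast hSA hx, by simp [hxv, hSf x hx]⟩
            exact_mod_cast this
          have hmax' : ∀ w ∈ (A' : Set V), w ∉ S → ¬ G.IsClique (insert w S) := by
            intro w hw hwS
            have hwA : w ∈ (A : Set V) := by
              have : w ∈ A' := by exact_mod_cast hw
              rw [hA', Finset.mem_sdiff] at this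
              exact_mod_cast this.1
            exact hmax w hwA hwS
          obtain ⟨u, huS, w, hwS, hne⟩ := hgood S hSA' hclique hmax' h2
          refine ⟨u, huS, w, hwS, ?_⟩
          have hu' : u ∈ A' := by exact_mod_cast hSA' huS
          have hw' : w ∈ A' := by exact_mod_cast hSA' hwS
          have huv : u ≠ v := by rintro rfl; exact hvS huS
          have hwv : w ≠ v := by rintro rfl; exact hvS hwS
          have huf : u ∉ A.filter (G.Adj v) := by
            rw [hA', Finset.mem_sdiff, hB] at hu'
            simp only [Finset.mem_insert] at hu'
            tauto
          have hwf : w ∉ A.filter (G.Adj v) := by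
            rw [hA', Finset.mem_sdiff, hB] at hw'
            simp only [Finset.mem_insert] at hw'
            tauto
          have e1 : c u = c' u := by simp only [hc]; rw [if_neg huv, if_neg huf]
          have e2 : c w = c' w := by simp only [hc]; rw [if_neg hwv, if_neg hwf]
          rw [e1, e2]; exact hne
    · -- base case: all degrees within A are < s
      push_neg at hdeg
      by_cases hAe : A = ∅
      · subst hAe
        refine ⟨0, 0, fun _ => 0, by simp, by simp, ?_⟩
        intro S hSA _ _ h2
        simp only [Finset.coe_empty, Set.subset_empty_iff] at hSA
        subst hSA
        simp at h2
      · have hApos : 1 ≤ A.card := Finset.card_pos.2 (Finset.nonempty_of_ne_empty hAe)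
        set t : ℕ := min s A.card with ht
        have hdeg' : ∀ u ∈ A, (A.filter (G.Adj u)).card < t := by
          intro u hu
          have h1 : (A.filter (G.Adj u)).card < s := hdeg u hu
          have h2 : (A.filter (G.Adj u)).card < A.card := by
            refine Finset.card_lt_card ?_
            rw [Finset.ssubset_iff_of_subset (Finset.filter_subset _ _)]
            refine ⟨u, hu, ?_⟩
            simp only [Finset.mem_filter]
            rintro ⟨-, hadj⟩
            exact G.loopless.irrefl u hadj
          omega
        obtain ⟨c, hcb, hcp⟩ := greedyCC G t d A hdeg'
        refine ⟨0, A.card, c, by simp, ?_, ?_⟩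
        · intro u hu
          right
          have := hcb u hu
          constructor
          · exact this.1
          · calc c u ≤ d + t := this.2
              _ = d + 0 + min s A.card := by omega
        · intro S hSA hclique _ h2
          have hfin : S.Finite := A.finite_toSet.subset hSA
          obtain ⟨u, huS, w, hwS, hne⟩ := (Set.one_lt_ncard hfin).1 (by omega)
          have hadj : G.Adj u w := hclique huS hwS hne
          exact ⟨u, huS, w, hwS,
            hcp u (by exact_mod_cast hSA huS) w (by exact_mod_cast hSA hwS) hadj⟩

end Aux

private lemma keyIneqCC (s n m h c : ℤ) (h1 : s * s ≤ n) (h2 : n ≤ s * s + 2 * s)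
    (h3 : 1 ≤ s) (h4 : m * (s + 1) + h ≤ n) (h5 : c ≤ s) (h6 : c ≤ h) (h0 : 0 ≤ m)
    (hc : 0 ≤ c) (hh : 0 ≤ h) : (1 + m + c) ^ 2 ≤ 4 * n := by
  have hm : m ≤ s := by nlinarith
  rcases eq_or_lt_of_le hm with rfl | hm'
  · nlinarith
  · nlinarith [sq_nonneg (m + c - s), sq_nonneg (s - m - 1)]

/-- Every graph on `n ≥ 1` vertices has clique chromatic number at most `2√n`. -/
theorem cliqueChromNum_le_two_sqrt {V : Type*} [Fintype V] (G : SimpleGraph V)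
    (h : 1 ≤ Fintype.card V) :
    (cliqueChromNum G : ℝ) ≤ 2 * Real.sqrt (Fintype.card V) := by
  classical
  set n : ℕ := Fintype.card V with hn
  set s : ℕ := Nat.sqrt n with hsdef
  have hs : 1 ≤ s := Nat.sqrt_pos.2 h
  have hs1 : s * s ≤ n := Nat.sqrt_le n
  have hs2 : n < (s + 1) * (s + 1) := Nat.lt_succ_sqrt n
  obtain ⟨m, hh, c, hcount, hbound, hgood⟩ :=
    mainCC G s hs n Finset.univ (by simp [hn]) 0
  set k : ℕ := m + min s hh + 1 with hk
  have hclt : ∀ u : V, c u < k := by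
    intro u
    rcases hbound u (Finset.mem_univ u) with h0 | ⟨_, hhi⟩ <;> omega
  set cfin : V → Fin k := fun u => ⟨c u, hclt u⟩ with hcfin
  have hcol : IsCliqueColouring G cfin := by
    intro S hSmax h2 ⟨a, ha⟩
    have hmax : ∀ w ∈ ((Finset.univ : Finset V) : Set V), w ∉ S → ¬ G.IsClique (insert w S) := by
      intro w _ hwS hcl
      exact hwS (hSmax.2 hcl (Set.subset_insert _ _) (Set.mem_insert _ _))
    obtain ⟨u, huS, w, hwS, hne⟩ := hgood S (by simp) hSmax.1 hmax h2
    apply hne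
    have h1 := ha u huS
    have h2' := ha w hwS
    have : cfin u = cfin w := by rw [h1, h2']
    simpa [hcfin, Fin.ext_iff] using this
  have hmem : k ∈ {k : ℕ | ∃ c : V → Fin k, IsCliqueColouring G c} := ⟨cfin, hcol⟩
  have hle : cliqueChromNum G ≤ k := Nat.sInf_le hmem
  have hcountn : m * (s + 1) + hh ≤ n := by simpa [hn] using hcount
  -- key numeric inequality
  have hkey : (k : ℤ) ^ 2 ≤ 4 * (n : ℤ) := by
    have := keyIneqCC (s : ℤ) (n : ℤ) (m : ℤ) (hh : ℤ) ((min s hh : ℕ) : ℤ)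
      (by exact_mod_cast hs1) (by push_cast; nlinarith [hs2]) (by exact_mod_cast hs)
      (by exact_mod_cast hcountn) (by exact_mod_cast Nat.min_le_left s hh)
      (by exact_mod_cast Nat.min_le_right s hh) (by positivity) (by positivity) (by positivity)
    calc (k : ℤ) ^ 2 = (1 + (m : ℤ) + ((min s hh : ℕ) : ℤ)) ^ 2 := by
          rw [hk]; push_cast; ring_nf
      _ ≤ 4 * (n : ℤ) := this
  have hkreal : (k : ℝ) ≤ 2 * Real.sqrt n := by
    have h4n : (2 : ℝ) * Real.sqrt n = Real.sqrt (4 * n) := by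
      rw [show (4 : ℝ) * n = 2 ^ 2 * n by ring, Real.sqrt_mul (by positivity),
        Real.sqrt_sq (by norm_num)]
    rw [h4n]
    rw [Real.le_sqrt (by positivity) (by positivity)]
    exact_mod_cast hkey
  calc (cliqueChromNum G : ℝ) ≤ (k : ℝ) := by exact_mod_cast hle
    _ ≤ 2 * Real.sqrt n := hkreal
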